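/- Let K be a finite field with |K| = q and let W be a finite-dimensional K-vector space. Let (U,V) be a pair of tuples of length m = q+1 of Type A, i.e., there exist a subspace S ⊆ W and linearly independent vectors a, b ∈ W with S ∩ span{a,b} = {0}, such that V_1 = ⋯ = V_q = S + span{a,b}, V_{q+1} = S, and U_1, …, U_{q+1} are the q+1 subspaces S + span{α a + β b} as [α : β] ranges over the q+1 points of the projective line over K. Then (U,V) is a nontrivial solution of the isometry equation, i.e., ∑_{i=1}^{q+1} (1/|V_i|)·1_{V_i} = ∑_{i=1}^{q+1} (1/|U_i|)·1_{U_i} holds and there is no permutation π of {1,…,q+1} with V_i = U_{π(i)} for all i. -/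

import Mathlib

open Finset
open scoped Classical

/-- The pair of tuples `(U, V)` is a solution of the isometry equation
`∑ i, (1/|V i|) • 1_{V i} = ∑ i, (1/|U i|) • 1_{U i}` as real-valued functions on `W`. -/
def IsometrySolution {K W : Type*} [Field K] [AddCommGroup W] [Module K W]
    {m : ℕ} (U V : Fin m → Submodule K W) : Prop :=
  ∀ w : W,
    ∑ i, ((Nat.card ↥(V i) : ℝ))⁻¹ * (if w ∈ V i then 1 else 0) =
    ∑ i, ((Nat.card ↥(U i) : ℝ))⁻¹ * (if w ∈ U i then 1 else 0)

/-- Two tuples of subspaces are equivalent if one is a permutation of the other. -/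
def TuplesEquiv {K W : Type*} [Field K] [AddCommGroup W] [Module K W]
    {m : ℕ} (U V : Fin m → Submodule K W) : Prop :=
  ∃ π : Equiv.Perm (Fin m), ∀ i, V i = U (π i)

lemma aux_natCard_submodule {K W : Type*} [Field K] [Fintype K] [AddCommGroup W]
    [Module K W] [FiniteDimensional K W] (p : Submodule K W) :
    Nat.card ↥p = Fintype.card K ^ Module.finrank K ↥p := by
  have : Finite W := Module.finite_of_finite K
  have : Fintype ↥p := Fintype.ofFinite _
  rw [Nat.card_eq_fintype_card]
  exact Module.card_eq_pow_finrank

/-- A pair of Type A is a nontrivial solution of the isometry equation. -/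
theorem typeA_is_nontrivial_solution
    (K W : Type*) [Field K] [Fintype K] [AddCommGroup W] [Module K W]
    [FiniteDimensional K W]
    (S : Submodule K W) (a b : W)
    (hab : LinearIndependent K ![a, b])
    (hSab : S ⊓ Submodule.span K {a, b} = ⊥)
    (U V : Fin (Fintype.card K + 1) → Submodule K W)
    (hV : ∀ i, i ≠ Fin.last (Fintype.card K) → V i = S ⊔ Submodule.span K {a, b})
    (hVlast : V (Fin.last (Fintype.card K)) = S)
    -- the `U i` are the `q + 1` subspaces `S + span {α • a + β • b}` as `[α : β]`
    -- ranges over the projective line over `K`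
    (α β : Fin (Fintype.card K + 1) → K)
    (hαβ : ∀ i, (α i, β i) ≠ 0)
    (hproj : ∀ i j, i ≠ j → α i * β j ≠ α j * β i)
    (hU : ∀ i, U i = S ⊔ Submodule.span K {α i • a + β i • b}) :
    IsometrySolution U V ∧ ¬ TuplesEquiv U V := by
  classical
  have hq0 : ((Fintype.card K : ℕ) : ℝ) ≠ 0 := Nat.cast_ne_zero.mpr Fintype.card_ne_zero
  set P := Submodule.span K {a, b} with hPdef
  set v : Fin ((Fintype.card K) + 1) → W := fun i => α i • a + β i • b with hvdef
  have hU' : ∀ i, U i = S ⊔ Submodule.span K {v i} := hU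
  have hpair := LinearIndependent.pair_iff.mp hab
  have hvne : ∀ i, v i ≠ 0 := by
    intro i hvi
    rcases hpair _ _ hvi with ⟨h1, h2⟩
    exact hαβ i (by simp [Prod.ext_iff, h1, h2])
  have haP : a ∈ P := Submodule.subset_span (by simp)
  have hbP : b ∈ P := Submodule.subset_span (by simp)
  have hvP : ∀ i, v i ∈ P := fun i =>
    Submodule.add_mem _ (Submodule.smul_mem _ _ haP) (Submodule.smul_mem _ _ hbP)
  have hLP : ∀ i, Submodule.span K {v i} ≤ P := fun i =>
    Submodule.span_le.mpr (by rintro x rfl; exact hvP i)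
  have hUsub : ∀ i, U i ≤ S ⊔ P := fun i => by
    rw [hU' i]; exact sup_le_sup_left (hLP i) S
  -- finranks
  have hrankP : Module.finrank K P = 2 := by
    have h := finrank_span_eq_card hab
    have hr : Set.range ![a, b] = {a, b} := by
      ext x; simp [Fin.exists_fin_two, or_comm]
    rw [hr] at h
    simpa [hPdef] using h
  set d := Module.finrank K S with hddef
  have hranksup : ∀ T : Submodule K W, T ≤ P →
      Module.finrank K ↥(S ⊔ T) = d + Module.finrank K ↥T := by
    intro T hT
    have h0 : S ⊓ T = ⊥ := by
      rw [eq_bot_iff, ← hSab]; exact inf_le_inf_left _ hT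
    have h := Submodule.finrank_sup_add_finrank_inf_eq S T
    rw [h0] at h
    simpa using h
  -- cardinalities
  have cardSP : Nat.card ↥(S ⊔ P) = (Fintype.card K) ^ (d + 2) := by
    rw [aux_natCard_submodule, hranksup P le_rfl, hrankP]
  have cardS : Nat.card ↥S = (Fintype.card K) ^ d := by rw [aux_natCard_submodule]
  have cardU : ∀ i, Nat.card ↥(U i) = (Fintype.card K) ^ (d + 1) := by
    intro i
    rw [hU' i, aux_natCard_submodule, hranksup _ (hLP i), finrank_span_singleton (hvne i)]
  -- existence and uniqueness of the line through a given point
  set f : Fin ((Fintype.card K) + 1) → Option K :=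
    fun i => if β i = 0 then none else some (α i / β i) with hfdef
  have hfinj : Function.Injective f := by
    intro i j hij
    by_contra hne
    by_cases hbi : β i = 0 <;> by_cases hbj : β j = 0
    · exact hproj i j hne (by rw [hbi, hbj]; ring)
    · simp [hfdef, hbi, hbj] at hij
    · simp [hfdef, hbi, hbj] at hij
    · simp only [hfdef, hbi, hbj, if_neg, if_false, Option.some.injEq] at hij
      apply hproj i j hne
      field_simp at hij
      linear_combination hij
  have hfsurj : Function.Surjective f :=
    ((Fintype.bijective_iff_injective_and_card f).mpr
      ⟨hfinj, by simp⟩).2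
  have key : ∀ w : W, w ∈ S ⊔ P → w ∉ S → ∃! i, w ∈ U i := by
    intro w hwP hwS
    obtain ⟨s, hs, p, hp, rfl⟩ := Submodule.mem_sup.mp hwP
    obtain ⟨x, y, rfl⟩ := Submodule.mem_span_pair.mp hp
    have hxy : ¬(x = 0 ∧ y = 0) := by
      rintro ⟨rfl, rfl⟩; simp at hwS; exact hwS hs
    have hexists : ∃ i, x • a + y • b ∈ Submodule.span K {v i} := by
      by_cases hy : y = 0
      · have hx : x ≠ 0 := fun hx => hxy ⟨hx, hy⟩
        obtain ⟨i, hi⟩ := hfsurj none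
        have hbi : β i = 0 := by
          by_contra hbi; simp [hfdef, hbi] at hi
        have hai : α i ≠ 0 := by
          intro hai; exact hαβ i (by simp [Prod.ext_iff, hai, hbi])
        refine ⟨i, Submodule.mem_span_singleton.mpr ⟨x / α i, ?_⟩⟩
        simp only [hvdef, hbi, hy, zero_smul, add_zero, smul_smul]
        rw [div_mul_cancel₀ _ hai]
      · obtain ⟨i, hi⟩ := hfsurj (some (x / y))
        have hbi : β i ≠ 0 := by
          intro hbi; simp [hfdef, hbi] at hi
        have hrel : α i * y = x * β i := by
          simp only [hfdef, hbi, if_neg, if_false, Option.some.injEq] at hi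
          field_simp at hi
          linear_combination hi
        refine ⟨i, Submodule.mem_span_singleton.mpr ⟨y / β i, ?_⟩⟩
        simp only [hvdef, smul_add, smul_smul]
        congr 1
        · rw [div_mul_eq_mul_div, mul_comm, hrel, mul_div_assoc,
            div_self hbi, mul_one]
        · rw [div_mul_cancel₀ _ hbi]
    obtain ⟨i, hi⟩ := hexists
    refine ⟨i, ?_, ?_⟩
    · show s + (x • a + y • b) ∈ U i
      rw [hU' i]
      exact Submodule.mem_sup.mpr ⟨s, hs, _, hi, rfl⟩
    · intro j hj
      by_contra hne
      -- w lies in both U j and U i with i ≠ j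
      have hwi : s + (x • a + y • b) ∈ U i := by
        rw [hU' i]; exact Submodule.mem_sup.mpr ⟨s, hs, _, hi, rfl⟩
      rw [hU' j] at hj
      rw [hU' i] at hwi
      obtain ⟨s1, hs1, z1, hz1, he1⟩ := Submodule.mem_sup.mp hj
      obtain ⟨s2, hs2, z2, hz2, he2⟩ := Submodule.mem_sup.mp hwi
      obtain ⟨c1, rfl⟩ := Submodule.mem_span_singleton.mp hz1
      obtain ⟨c2, rfl⟩ := Submodule.mem_span_singleton.mp hz2
      have hdiff : c1 • v j - c2 • v i ∈ S ⊓ P := by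
        constructor
        · have h : c1 • v j - c2 • v i = s2 - s1 := by
            rw [sub_eq_sub_iff_add_eq_add, add_comm (c1 • v j) s1]
            exact he1.trans he2.symm
          rw [h]; exact Submodule.sub_mem _ hs2 hs1
        · exact Submodule.sub_mem _ (Submodule.smul_mem _ _ (hvP j))
            (Submodule.smul_mem _ _ (hvP i))
      rw [hSab] at hdiff
      have heq : c1 • v j = c2 • v i :=
        sub_eq_zero.mp ((Submodule.mem_bot K).mp hdiff)
      have hc1 : c1 ≠ 0 := by
        rintro rfl
        rw [zero_smul, add_zero] at he1
        exact hwS (he1 ▸ hs1)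
      have hcomp : c1 * α j = c2 * α i ∧ c1 * β j = c2 * β i := by
        have h0 : (c1 * α j - c2 * α i) • a + (c1 * β j - c2 * β i) • b = 0 := by
          have h : c1 • v j - c2 • v i = 0 := sub_eq_zero.mpr heq
          simp only [hvdef, smul_add, smul_smul] at h
          simp only [sub_smul]
          rw [← h]; abel
        obtain ⟨h1, h2⟩ := hpair _ _ h0
        exact ⟨sub_eq_zero.mp h1, sub_eq_zero.mp h2⟩
      apply hproj j i hne
      apply mul_left_cancel₀ hc1
      linear_combination β i * hcomp.1 - α i * hcomp.2
  constructor
  · -- the isometry equation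
    intro w
    by_cases hwP : w ∈ S ⊔ P
    · by_cases hwS : w ∈ S
      · -- w ∈ S : all memberships hold
        have hVmem : ∀ i, w ∈ V i := by
          intro i
          by_cases hi : i = Fin.last (Fintype.card K)
          · rw [hi, hVlast]; exact hwS
          · rw [hV i hi]; exact Submodule.mem_sup_left hwS
        have hUmem : ∀ i, w ∈ U i := by
          intro i; rw [hU' i]; exact Submodule.mem_sup_left hwS
        have hL : ∑ i, ((Nat.card ↥(V i) : ℝ))⁻¹ * (if w ∈ V i then 1 else 0)
            = (Fintype.card K) * (((Fintype.card K) : ℝ) ^ (d + 2))⁻¹ + (((Fintype.card K) : ℝ) ^ d)⁻¹ := by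
          rw [Fin.sum_univ_castSucc]
          have : ∀ i : Fin (Fintype.card K), ((Nat.card ↥(V i.castSucc) : ℝ))⁻¹ *
              (if w ∈ V i.castSucc then 1 else 0) = (((Fintype.card K) : ℝ) ^ (d + 2))⁻¹ := by
            intro i
            have hne := (Fin.castSucc_lt_last i).ne
            rw [if_pos (hVmem _), mul_one, hV _ hne, cardSP]
            push_cast; ring
          rw [Finset.sum_congr rfl (fun i _ => this i), Finset.sum_const,
            if_pos (hVmem _), mul_one, hVlast, cardS]
          push_cast
          simp [nsmul_eq_mul]
        have hR : ∑ i, ((Nat.card ↥(U i) : ℝ))⁻¹ * (if w ∈ U i then 1 else 0)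
            = ((Fintype.card K) + 1) * (((Fintype.card K) : ℝ) ^ (d + 1))⁻¹ := by
          have : ∀ i : Fin ((Fintype.card K) + 1), ((Nat.card ↥(U i) : ℝ))⁻¹ *
              (if w ∈ U i then 1 else 0) = (((Fintype.card K) : ℝ) ^ (d + 1))⁻¹ := by
            intro i
            rw [if_pos (hUmem i), mul_one, cardU i]
            push_cast; ring
          rw [Finset.sum_congr rfl (fun i _ => this i), Finset.sum_const]
          push_cast
          simp [nsmul_eq_mul]
        rw [hL, hR]
        field_simp
        ring
      · -- w ∈ (S ⊔ P) \ S
        obtain ⟨i₀, hi₀, huniq⟩ := key w hwP hwS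
        have hL : ∑ i, ((Nat.card ↥(V i) : ℝ))⁻¹ * (if w ∈ V i then 1 else 0)
            = (Fintype.card K) * (((Fintype.card K) : ℝ) ^ (d + 2))⁻¹ := by
          rw [Fin.sum_univ_castSucc]
          have : ∀ i : Fin (Fintype.card K), ((Nat.card ↥(V i.castSucc) : ℝ))⁻¹ *
              (if w ∈ V i.castSucc then 1 else 0) = (((Fintype.card K) : ℝ) ^ (d + 2))⁻¹ := by
            intro i
            have hne := (Fin.castSucc_lt_last i).ne
            rw [hV _ hne, if_pos hwP, mul_one, cardSP]
            push_cast; ring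
          rw [Finset.sum_congr rfl (fun i _ => this i), Finset.sum_const,
            hVlast, if_neg hwS, mul_zero, add_zero]
          simp [nsmul_eq_mul]
        have hR : ∑ i, ((Nat.card ↥(U i) : ℝ))⁻¹ * (if w ∈ U i then 1 else 0)
            = (((Fintype.card K) : ℝ) ^ (d + 1))⁻¹ := by
          rw [Finset.sum_eq_single i₀]
          · rw [if_pos hi₀, mul_one, cardU i₀]; push_cast; ring
          · intro j _ hj
            rw [if_neg (fun hmem => hj (huniq j hmem)), mul_zero]
          · intro h; exact absurd (Finset.mem_univ i₀) h
        rw [hL, hR]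
        field_simp
        ring
      -- w ∉ S ⊔ P : everything vanishes
    · have hVnm : ∀ i, w ∉ V i := by
        intro i hmem
        by_cases hi : i = Fin.last (Fintype.card K)
        · rw [hi, hVlast] at hmem; exact hwP (Submodule.mem_sup_left hmem)
        · rw [hV i hi] at hmem; exact hwP hmem
      have hUnm : ∀ i, w ∉ U i := fun i hmem => hwP (hUsub i hmem)
      simp [hVnm, hUnm]
  · -- nontriviality
    rintro ⟨π, hπ⟩
    have h := hπ (Fin.last (Fintype.card K))
    rw [hVlast, hU'] at h
    have hvmem : v (π (Fin.last (Fintype.card K))) ∈ S := by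
      rw [h]
      exact Submodule.mem_sup_right (Submodule.mem_span_singleton_self (v _))
    have : v (π (Fin.last (Fintype.card K))) ∈ S ⊓ P := ⟨hvmem, hvP _⟩
    rw [hSab] at this
    exact hvne _ ((Submodule.mem_bot K).mp this)
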